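/- arXiv:1505.04688 — 2 statements merged into one kernel-verified Lean document; each statement's English description precedes it below -/
import Mathlib

section
/- The fixed point subalgebra of the Boolean C*-algebra under the shift, and under the permutations, both equal ℂP_# ⊕ ℂP_#^⊥: for X ∈ 𝔟 the following are equivalent: (i) U X U* = X; (ii) U_g X U_g* = X for every finitely supported permutation g of ℤ; (iii) X = a P_# + b (I − P_#) for some a, b ∈ ℂ. -/
open scoped InnerProductSpace ComplexOrder
open ContinuousLinearMap Filter

noncomputable section

/-- The Boolean Fock space `Γ = ℓ²({#} ∪ ℤ)`, concretely `ℓ²(Option ℤ)` (with `none`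
playing the role of `#`). -/
abbrev BF : Type := lp (fun _ : Option ℤ => ℂ) 2

/-- The canonical orthonormal basis: `eb none = e_#` and `eb (some j) = e_j`. -/
noncomputable def eb (i : Option ℤ) : BF := lp.single 2 i 1

/-- The rank-one orthogonal projection `P_#` onto `ℂ e_#`. -/
noncomputable def Psharp : BF →L[ℂ] BF := (innerSL ℂ (eb none)).smulRight (eb none)

/-- Membership in the Boolean C*-algebra `𝔟 = K(Γ) + ℂI`. -/
def MemBoole (X : BF →L[ℂ] BF) : Prop :=
  ∃ (A : BF →L[ℂ] BF) (b : ℂ), IsCompactOperator ⇑A ∧ X = A + b • (1 : BF →L[ℂ] BF)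

/-- `U` is the unitary implementing the shift: `U e_# = e_#`, `U e_j = e_{j+1}`. -/
def IsBooleShift (U : BF →L[ℂ] BF) : Prop :=
  U (eb none) = eb none ∧ ∀ j : ℤ, U (eb (some j)) = eb (some (j + 1))

/-- `V g` is the unitary implementing the permutation `g`: `V g e_# = e_#`,
`V g e_j = e_{g j}`. -/
def IsBoolePermAction (V : Equiv.Perm ℤ → (BF →L[ℂ] BF)) : Prop :=
  ∀ g : Equiv.Perm ℤ, V g (eb none) = eb none ∧
    ∀ j : ℤ, V g (eb (some j)) = eb (some (g j))

/-- A permutation of `ℤ` is finitely supported if it moves only finitely many points. -/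
def FinSupported (g : Equiv.Perm ℤ) : Prop := {j : ℤ | g j ≠ j}.Finite

/-! ### Auxiliary lemmas -/

open Topology
open scoped ENNReal

lemma inner_eb_left (i : Option ℤ) (f : BF) : ⟪eb i, f⟫_ℂ = f i := by
  simp [eb, lp.inner_single_left]

lemma eb_apply (i j : Option ℤ) : (eb i : ∀ _ : Option ℤ, ℂ) j = if j = i then 1 else 0 := by
  simp [eb, lp.single_apply, Pi.single_apply]

lemma inner_eb_eb (i j : Option ℤ) : ⟪eb i, eb j⟫_ℂ = if i = j then 1 else 0 := by
  rw [inner_eb_left, eb_apply]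

lemma norm_eb (i : Option ℤ) : ‖eb i‖ = 1 := by
  have := lp.norm_single (p := 2) (E := fun _ : Option ℤ => ℂ) (by norm_num)
    i (1 : ℂ)
  simpa [eb] using this

lemma ext_coords {x y : BF} (h : ∀ i, ⟪eb i, x⟫_ℂ = ⟪eb i, y⟫_ℂ) : x = y := by
  apply lp.ext
  funext i
  have := h i
  rwa [inner_eb_left, inner_eb_left] at this

lemma clm_ext {T S : BF →L[ℂ] BF} (h : ∀ i, T (eb i) = S (eb i)) : T = S := by
  apply ContinuousLinearMap.ext
  intro f
  have hf : HasSum (fun i : Option ℤ => lp.single 2 i (f i)) f :=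
    lp.hasSum_single ENNReal.ofNat_ne_top f
  have hsingle : ∀ i, (lp.single 2 i (f i) : BF) = f i • eb i := by
    intro i
    rw [eb, ← lp.single_smul]
    simp
  have h1 : HasSum (fun i => T (lp.single 2 i (f i))) (T f) := hf.mapL T
  have h2 : HasSum (fun i => T (lp.single 2 i (f i))) (S f) := by
    have := hf.mapL S
    convert this using 2 with i
    simp [hsingle, h]
  exact h1.unique h2

lemma Psharp_apply (x : BF) : Psharp x = ⟪eb none, x⟫_ℂ • eb none := rfl

section perm
variable {W : BF →L[ℂ] BF} {σ : Equiv.Perm (Option ℤ)}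

lemma adjoint_on_basis (hW : ∀ i, W (eb i) = eb (σ i)) (i : Option ℤ) :
    ContinuousLinearMap.adjoint W (eb i) = eb (σ.symm i) := by
  apply ext_coords
  intro k
  rw [adjoint_inner_right, hW, inner_eb_eb, inner_eb_eb]
  by_cases h : σ k = i
  · rw [if_pos h, if_pos (by rw [← h]; exact (σ.symm_apply_apply k).symm)]
  · rw [if_neg h, if_neg (by intro hk; exact h (by rw [hk]; exact σ.apply_symm_apply i))]

lemma W_mul_adjoint (hW : ∀ i, W (eb i) = eb (σ i)) :
    W * ContinuousLinearMap.adjoint W = 1 := by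
  apply clm_ext
  intro i
  rw [ContinuousLinearMap.mul_apply, adjoint_on_basis hW, hW, Equiv.apply_symm_apply,
    ContinuousLinearMap.one_apply]

lemma entry_invariant (hW : ∀ i, W (eb i) = eb (σ i)) {Y : BF →L[ℂ] BF}
    (hfix : W * Y * ContinuousLinearMap.adjoint W = Y) (i j : Option ℤ) :
    ⟪eb (σ i), Y (eb (σ j))⟫_ℂ = ⟪eb i, Y (eb j)⟫_ℂ := by
  conv_lhs => rw [← hfix]
  rw [ContinuousLinearMap.mul_apply, ContinuousLinearMap.mul_apply,
    adjoint_on_basis hW, Equiv.symm_apply_apply, ← adjoint_inner_left,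
    adjoint_on_basis hW, Equiv.symm_apply_apply]

lemma W_Psharp_adjoint (hW : ∀ i, W (eb i) = eb (σ i)) (hnone : σ none = none) :
    W * Psharp * ContinuousLinearMap.adjoint W = Psharp := by
  apply ContinuousLinearMap.ext
  intro x
  rw [ContinuousLinearMap.mul_apply, ContinuousLinearMap.mul_apply, Psharp_apply, Psharp_apply,
    map_smul, adjoint_inner_right, hW, hnone]

lemma invariant_of_decomp (hW : ∀ i, W (eb i) = eb (σ i)) (hnone : σ none = none) (a b : ℂ) :
    W * (a • Psharp + b • ((1 : BF →L[ℂ] BF) - Psharp)) * ContinuousLinearMap.adjoint W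
      = a • Psharp + b • ((1 : BF →L[ℂ] BF) - Psharp) := by
  have h1 := W_Psharp_adjoint hW hnone
  have h2 := W_mul_adjoint hW
  have key : a • Psharp + b • ((1 : BF →L[ℂ] BF) - Psharp)
      = (a - b) • Psharp + b • (1 : BF →L[ℂ] BF) := by module
  rw [key]
  have expand : W * ((a - b) • Psharp + b • (1 : BF →L[ℂ] BF)) * ContinuousLinearMap.adjoint W
      = (a - b) • (W * Psharp * ContinuousLinearMap.adjoint W)
        + b • (W * ContinuousLinearMap.adjoint W) := by
    simp only [mul_add, add_mul, mul_smul_comm, smul_mul_assoc, mul_one]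
  rw [expand, h1, h2]

lemma A_invariant (hW : ∀ i, W (eb i) = eb (σ i)) (A : BF →L[ℂ] BF) (b : ℂ)
    (hfix : W * (A + b • (1 : BF →L[ℂ] BF)) * ContinuousLinearMap.adjoint W
      = A + b • (1 : BF →L[ℂ] BF)) :
    W * A * ContinuousLinearMap.adjoint W = A := by
  have h2 := W_mul_adjoint hW
  have expand : W * (A + b • (1 : BF →L[ℂ] BF)) * ContinuousLinearMap.adjoint W
      = W * A * ContinuousLinearMap.adjoint W + b • (W * ContinuousLinearMap.adjoint W) := by
    simp only [mul_add, add_mul, mul_smul_comm, smul_mul_assoc, mul_one]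
  rw [expand, h2] at hfix
  exact add_right_cancel hfix

lemma iter_entry (hW : ∀ i, W (eb i) = eb (σ i)) {Y : BF →L[ℂ] BF}
    (hfix : W * Y * ContinuousLinearMap.adjoint W = Y) :
    ∀ (n : ℕ) (i j : Option ℤ), ⟪eb i, Y (eb j)⟫_ℂ = ⟪eb (σ^[n] i), Y (eb (σ^[n] j))⟫_ℂ := by
  intro n
  induction n with
  | zero => intro i j; simp
  | succ n ih =>
    intro i j
    rw [ih i j, Function.iterate_succ_apply', Function.iterate_succ_apply']
    exact (entry_invariant hW hfix _ _).symm

end perm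

lemma coeff_tendsto_zero (v : BF) {idx : ℕ → Option ℤ} (h : Function.Injective idx) :
    Tendsto (fun n => v (idx n)) atTop (𝓝 0) := by
  have hmem : Memℓp (⇑v) 2 := lp.memℓp v
  have hs : Summable (fun i : Option ℤ => ‖v i‖ ^ (2 : ℝ≥0∞).toReal) :=
    hmem.summable (by norm_num)
  have h0 : Tendsto (fun i : Option ℤ => ‖v i‖ ^ (2 : ℝ≥0∞).toReal) cofinite (𝓝 0) :=
    hs.tendsto_cofinite_zero
  have hidx : Tendsto idx atTop cofinite := by
    rw [← Nat.cofinite_eq_atTop]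
    exact h.tendsto_cofinite
  have h1 : Tendsto (fun n => ‖v (idx n)‖ ^ (2 : ℝ≥0∞).toReal) atTop (𝓝 0) :=
    h0.comp hidx
  have h2 : Tendsto (fun n => (‖v (idx n)‖ ^ (2 : ℝ≥0∞).toReal) ^ ((2:ℝ)⁻¹)) atTop
      (𝓝 ((0:ℝ) ^ ((2:ℝ)⁻¹))) := by
    exact (Real.continuousAt_rpow_const 0 _ (Or.inr (by norm_num))).tendsto.comp h1
  have hzero : ((0:ℝ) ^ ((2:ℝ)⁻¹)) = 0 := by
    rw [Real.zero_rpow]; norm_num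
  rw [hzero] at h2
  have heq : ∀ n, (‖v (idx n)‖ ^ (2 : ℝ≥0∞).toReal) ^ ((2:ℝ)⁻¹) = ‖v (idx n)‖ := by
    intro n
    rw [← Real.rpow_mul (norm_nonneg _)]
    norm_num
  rw [tendsto_zero_iff_norm_tendsto_zero]
  exact (tendsto_congr heq).mp h2

lemma const_coeff_zero (v : BF) {c : ℂ} {idx : ℕ → Option ℤ} (h : Function.Injective idx)
    (hc : ∀ n, v (idx n) = c) : c = 0 := by
  have := coeff_tendsto_zero v h
  simp only [hc] at this
  exact tendsto_nhds_unique tendsto_const_nhds this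

lemma compact_entry_zero (A : BF →L[ℂ] BF) (hA : IsCompactOperator ⇑A) {c : ℂ}
    {p q : ℕ → ℤ} (hp : Function.Injective p)
    (h : ∀ n, ⟪eb (some (p n)), A (eb (some (q n)))⟫_ℂ = c) : c = 0 := by
  obtain ⟨K, hK, hKmem⟩ := hA
  obtain ⟨ε, hε, hball⟩ := Metric.mem_nhds_iff.mp hKmem
  set δ : ℝ := ε / 2 with hδdef
  have hδ : 0 < δ := by positivity
  set y : ℕ → BF := fun n => A ((δ : ℂ) • eb (some (q n))) with hy_def
  have hy : ∀ n, y n ∈ K := by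
    intro n
    apply hball
    rw [Metric.mem_ball, dist_zero_right, norm_smul, norm_eb, mul_one,
      Complex.norm_real, Real.norm_eq_abs, abs_of_pos hδ]
    linarith
  obtain ⟨L, hL, φ, hφ, hconv⟩ := hK.tendsto_subseq hy
  have hval : ∀ k, ⟪eb (some (p (φ k))), y (φ k)⟫_ℂ = (δ : ℂ) * c := by
    intro k
    rw [hy_def]
    simp only [map_smul, inner_smul_right]
    rw [h]
  have hsplit : ∀ k, ⟪eb (some (p (φ k))), y (φ k)⟫_ℂ
      = ⟪eb (some (p (φ k))), L⟫_ℂ + ⟪eb (some (p (φ k))), y (φ k) - L⟫_ℂ := by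
    intro k
    rw [← inner_add_right]
    congr 1
    abel
  have hidx : Function.Injective (fun k => (some (p (φ k)) : Option ℤ)) :=
    (Option.some_injective ℤ).comp (hp.comp hφ.injective)
  have ht1 : Tendsto (fun k => ⟪eb (some (p (φ k))), L⟫_ℂ) atTop (𝓝 0) := by
    simp only [inner_eb_left]
    exact coeff_tendsto_zero L hidx
  have ht2 : Tendsto (fun k => ⟪eb (some (p (φ k))), y (φ k) - L⟫_ℂ) atTop (𝓝 0) := by
    apply squeeze_zero_norm (a := fun k => ‖y (φ k) - L‖)
    · intro k
      calc ‖⟪eb (some (p (φ k))), y (φ k) - L⟫_ℂ‖ ≤ ‖eb (some (p (φ k)))‖ * ‖y (φ k) - L‖ :=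
            norm_inner_le_norm _ _
        _ = ‖y (φ k) - L‖ := by rw [norm_eb, one_mul]
    · exact tendsto_iff_norm_sub_tendsto_zero.mp hconv
  have hlim : Tendsto (fun k => ⟪eb (some (p (φ k))), y (φ k)⟫_ℂ) atTop (𝓝 0) := by
    simp only [hsplit]
    simpa using ht1.add ht2
  simp only [hval] at hlim
  have hzero : (δ : ℂ) * c = 0 := tendsto_nhds_unique tendsto_const_nhds hlim
  have hδc : (δ : ℂ) ≠ 0 := by exact_mod_cast hδ.ne'
  exact (mul_eq_zero.mp hzero).resolve_left hδc

lemma reconstruct (A : BF →L[ℂ] BF)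
    (hrow : ∀ j : ℤ, ⟪eb none, A (eb (some j))⟫_ℂ = 0)
    (hcol : ∀ i : ℤ, ⟪eb (some i), A (eb none)⟫_ℂ = 0)
    (hij : ∀ i j : ℤ, ⟪eb (some i), A (eb (some j))⟫_ℂ = 0) :
    A = ⟪eb none, A (eb none)⟫_ℂ • Psharp := by
  apply clm_ext
  intro j
  apply ext_coords
  intro i
  rcases i with _ | i <;> rcases j with _ | j <;>
    simp [Psharp_apply, inner_eb_eb, inner_smul_right, hrow, hcol, hij, norm_eb,
      ContinuousLinearMap.smul_apply]

lemma finSupported_swap (a b : ℤ) : FinSupported (Equiv.swap a b) := by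
  apply Set.Finite.subset (Set.finite_singleton a |>.insert b)
  intro j hj
  by_contra hmem
  simp only [Set.mem_insert_iff, Set.mem_singleton_iff, not_or] at hmem
  exact hj (Equiv.swap_apply_of_ne_of_ne hmem.2 hmem.1)

lemma finSupported_mul {g h : Equiv.Perm ℤ} (hg : FinSupported g) (hh : FinSupported h) :
    FinSupported (g * h) := by
  apply Set.Finite.subset (hg.union hh)
  intro j hj
  by_contra hmem
  simp only [Set.mem_union, Set.mem_setOf_eq, not_or, not_not] at hmem
  exact hj (by rw [Equiv.Perm.mul_apply, hmem.2, hmem.1])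

lemma decomp_exists (A : BF →L[ℂ] BF) (b : ℂ)
    (hrow : ∀ j : ℤ, ⟪eb none, A (eb (some j))⟫_ℂ = 0)
    (hcol : ∀ i : ℤ, ⟪eb (some i), A (eb none)⟫_ℂ = 0)
    (hij : ∀ i j : ℤ, ⟪eb (some i), A (eb (some j))⟫_ℂ = 0) :
    ∃ a c : ℂ, A + b • (1 : BF →L[ℂ] BF)
      = a • Psharp + c • ((1 : BF →L[ℂ] BF) - Psharp) := by
  have hrec := reconstruct A hrow hcol hij
  refine ⟨⟪eb none, A (eb none)⟫_ℂ + b, b, ?_⟩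
  conv_lhs => rw [hrec]
  module

/-- Proposition 6.1 (Proposition `fixal`): the fixed point subalgebra of the Boolean
C*-algebra `𝔟` under the shift, and under the (finitely supported) permutations, both
equal `ℂP_# ⊕ ℂP_#^⊥`: for `X ∈ 𝔟`, the conditions `U X U* = X`,
`U_g X U_g* = X` for all finitely supported permutations `g`, and
`X = a P_# + b (I − P_#)` for some `a, b ∈ ℂ`, are all equivalent. -/
theorem boolean_fixed_point_subalgebra
    (U : BF →L[ℂ] BF) (hU : IsBooleShift U)
    (V : Equiv.Perm ℤ → (BF →L[ℂ] BF)) (hV : IsBoolePermAction V)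
    (X : BF →L[ℂ] BF) (hX : MemBoole X) :
    ((U * X * ContinuousLinearMap.adjoint U = X) ↔
      ∃ a b : ℂ, X = a • Psharp + b • ((1 : BF →L[ℂ] BF) - Psharp)) ∧
    ((∀ g : Equiv.Perm ℤ, FinSupported g →
        V g * X * ContinuousLinearMap.adjoint (V g) = X) ↔
      ∃ a b : ℂ, X = a • Psharp + b • ((1 : BF →L[ℂ] BF) - Psharp)) := by
  obtain ⟨A, b, hA, rfl⟩ := hX
  -- setup for the shift
  set σs : Equiv.Perm (Option ℤ) := Equiv.optionCongr (Equiv.addRight (1:ℤ)) with hσs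
  have hσs_some : ∀ a : ℤ, σs (some a) = some (a + 1) := by intro a; simp [hσs]
  have hσs_none : σs none = none := by simp [hσs]
  have hWσ : ∀ i, U (eb i) = eb (σs i) := by
    rintro (_ | j)
    · rw [hσs_none]; exact hU.1
    · rw [hσs_some]; exact hU.2 j
  have hiters : ∀ (n : ℕ) (a : ℤ), σs^[n] (some a) = some (a + n) := by
    intro n
    induction n with
    | zero => intro a; simp
    | succ n ih =>
      intro a
      rw [Function.iterate_succ_apply', ih, hσs_some]
      congr 1
      push_cast
      ring
  have hitern : ∀ n : ℕ, σs^[n] none = none := by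
    intro n
    induction n with
    | zero => simp
    | succ n ih => rw [Function.iterate_succ_apply', ih, hσs_none]
  -- setup for the permutations
  have hWg : ∀ g : Equiv.Perm ℤ, ∀ i, V g (eb i) = eb (g.optionCongr i) := by
    intro g
    rintro (_ | j)
    · simpa using (hV g).1
    · simpa using (hV g).2 j
  have hinj : ∀ k : ℤ, Function.Injective (fun n : ℕ => (k + n : ℤ)) := by
    intro k a b hab
    simp only at hab
    omega
  -- forward direction for the shift
  have shift_forward : U * (A + b • (1 : BF →L[ℂ] BF)) * ContinuousLinearMap.adjoint U
      = A + b • (1 : BF →L[ℂ] BF) →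
      ∃ a c : ℂ, A + b • (1 : BF →L[ℂ] BF)
        = a • Psharp + c • ((1 : BF →L[ℂ] BF) - Psharp) := by
    intro hfix
    have hAinv : U * A * ContinuousLinearMap.adjoint U = A := A_invariant hWσ A b hfix
    have iter := iter_entry hWσ hAinv
    apply decomp_exists A b
    · -- row
      intro j
      have hc : ∀ n : ℕ, (ContinuousLinearMap.adjoint A (eb none) : ∀ _ : Option ℤ, ℂ)
          (some (j + n)) = starRingEnd ℂ ⟪eb none, A (eb (some j))⟫_ℂ := by
        intro n
        rw [← inner_eb_left, adjoint_inner_right, ← inner_conj_symm]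
        congr 1
        rw [iter n none (some j), hitern, hiters]
      have := const_coeff_zero (ContinuousLinearMap.adjoint A (eb none))
        ((Option.some_injective ℤ).comp (hinj j)) hc
      exact star_eq_zero.mp this
    · -- column
      intro i
      have hc : ∀ n : ℕ, (A (eb none) : ∀ _ : Option ℤ, ℂ) (some (i + n))
          = ⟪eb (some i), A (eb none)⟫_ℂ := by
        intro n
        rw [← inner_eb_left, iter n (some i) none, hitern, hiters]
      exact const_coeff_zero (A (eb none)) ((Option.some_injective ℤ).comp (hinj i)) hc
    · -- matrix part
      intro i j
      apply compact_entry_zero A hA (p := fun n : ℕ => (i + n : ℤ)) (q := fun n : ℕ => (j + n : ℤ))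
        (hinj i)
      intro n
      rw [← hiters n i, ← hiters n j]
      exact (iter n (some i) (some j)).symm
  -- forward direction for the permutations
  have perm_forward :
      (∀ g : Equiv.Perm ℤ, FinSupported g →
        V g * (A + b • (1 : BF →L[ℂ] BF)) * ContinuousLinearMap.adjoint (V g)
          = A + b • (1 : BF →L[ℂ] BF)) →
      ∃ a c : ℂ, A + b • (1 : BF →L[ℂ] BF)
        = a • Psharp + c • ((1 : BF →L[ℂ] BF) - Psharp) := by
    intro hfix
    have hE : ∀ g : Equiv.Perm ℤ, FinSupported g → ∀ i j : Option ℤ,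
        ⟪eb (g.optionCongr i), A (eb (g.optionCongr j))⟫_ℂ = ⟪eb i, A (eb j)⟫_ℂ := by
      intro g hg
      exact entry_invariant (hWg g) (A_invariant (hWg g) A b (hfix g hg))
    have hEs : ∀ (g : Equiv.Perm ℤ), FinSupported g → ∀ x y : ℤ,
        ⟪eb (some (g x)), A (eb (some (g y)))⟫_ℂ = ⟪eb (some x), A (eb (some y))⟫_ℂ := by
      intro g hg x y
      simpa using hE g hg (some x) (some y)
    have hEr : ∀ (g : Equiv.Perm ℤ), FinSupported g → ∀ y : ℤ,
        ⟪eb none, A (eb (some (g y)))⟫_ℂ = ⟪eb none, A (eb (some y))⟫_ℂ := by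
      intro g hg y
      simpa using hE g hg none (some y)
    have hEc : ∀ (g : Equiv.Perm ℤ), FinSupported g → ∀ x : ℤ,
        ⟪eb (some (g x)), A (eb none)⟫_ℂ = ⟪eb (some x), A (eb none)⟫_ℂ := by
      intro g hg x
      simpa using hE g hg (some x) none
    apply decomp_exists A b
    · -- row
      intro j
      have hc : ∀ n : ℕ, (ContinuousLinearMap.adjoint A (eb none) : ∀ _ : Option ℤ, ℂ)
          (some (j + 1 + n)) = starRingEnd ℂ ⟪eb none, A (eb (some j))⟫_ℂ := by
        intro n
        rw [← inner_eb_left, adjoint_inner_right, ← inner_conj_symm]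
        congr 1
        have := hEr (Equiv.swap j (j + 1 + n)) (finSupported_swap _ _) j
        rwa [Equiv.swap_apply_left] at this
      have := const_coeff_zero (ContinuousLinearMap.adjoint A (eb none))
        ((Option.some_injective ℤ).comp (hinj (j + 1))) hc
      exact star_eq_zero.mp this
    · -- column
      intro i
      have hc : ∀ n : ℕ, (A (eb none) : ∀ _ : Option ℤ, ℂ) (some (i + 1 + n))
          = ⟪eb (some i), A (eb none)⟫_ℂ := by
        intro n
        rw [← inner_eb_left]
        have := hEc (Equiv.swap i (i + 1 + n)) (finSupported_swap _ _) i
        rwa [Equiv.swap_apply_left] at this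
      exact const_coeff_zero (A (eb none)) ((Option.some_injective ℤ).comp (hinj (i + 1))) hc
    · -- matrix part
      intro i j
      by_cases hd : i = j
      · subst hd
        apply compact_entry_zero A hA (p := fun n : ℕ => (i + 1 + n : ℤ))
          (q := fun n : ℕ => (i + 1 + n : ℤ)) (hinj (i + 1))
        intro n
        have := hEs (Equiv.swap i (i + 1 + n)) (finSupported_swap _ _) i i
        rwa [Equiv.swap_apply_left] at this
      · have hiM : i ≤ max i j := le_max_left i j
        have hjM : j ≤ max i j := le_max_right i j
        apply compact_entry_zero A hA (p := fun n : ℕ => (max i j + 1 + 2 * n : ℤ))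
          (q := fun n : ℕ => (max i j + 2 + 2 * n : ℤ))
          (by intro a b hab; simp only at hab; omega)
        intro n
        have his : i ≠ max i j + 1 + 2 * (n : ℤ) := by omega
        have hit : i ≠ max i j + 2 + 2 * (n : ℤ) := by omega
        have hts : (max i j + 2 + 2 * (n : ℤ)) ≠ max i j + 1 + 2 * (n : ℤ) := by omega
        have hti : (max i j + 2 + 2 * (n : ℤ)) ≠ i := by omega
        have hg : FinSupported
            (Equiv.swap i (max i j + 1 + 2 * (n : ℤ)) *
              Equiv.swap j (max i j + 2 + 2 * (n : ℤ))) :=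
          finSupported_mul (finSupported_swap _ _) (finSupported_swap _ _)
        have hgi : (Equiv.swap i (max i j + 1 + 2 * (n : ℤ)) *
            Equiv.swap j (max i j + 2 + 2 * (n : ℤ))) i
            = max i j + 1 + 2 * (n : ℤ) := by
          rw [Equiv.Perm.mul_apply, Equiv.swap_apply_of_ne_of_ne hd hit, Equiv.swap_apply_left]
        have hgj : (Equiv.swap i (max i j + 1 + 2 * (n : ℤ)) *
            Equiv.swap j (max i j + 2 + 2 * (n : ℤ))) j
            = max i j + 2 + 2 * (n : ℤ) := by
          rw [Equiv.Perm.mul_apply, Equiv.swap_apply_left,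
            Equiv.swap_apply_of_ne_of_ne hti hts]
        have := hEs _ hg i j
        rwa [hgi, hgj] at this
  -- backward direction
  have backward : ∀ a c : ℂ,
      A + b • (1 : BF →L[ℂ] BF) = a • Psharp + c • ((1 : BF →L[ℂ] BF) - Psharp) →
      (U * (A + b • (1 : BF →L[ℂ] BF)) * ContinuousLinearMap.adjoint U
        = A + b • (1 : BF →L[ℂ] BF)) ∧
      ∀ g : Equiv.Perm ℤ,
        V g * (A + b • (1 : BF →L[ℂ] BF)) * ContinuousLinearMap.adjoint (V g)
          = A + b • (1 : BF →L[ℂ] BF) := by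
    intro a c hdec
    constructor
    · rw [hdec]
      exact invariant_of_decomp hWσ hσs_none a c
    · intro g
      rw [hdec]
      exact invariant_of_decomp (hWg g) (by simp) a c
  refine ⟨⟨shift_forward, ?_⟩, ⟨perm_forward, ?_⟩⟩
  · rintro ⟨a, c, hdec⟩
    exact (backward a c hdec).1
  · rintro ⟨a, c, hdec⟩ g _
    exact (backward a c hdec).2 g

end
end

section
/- Key estimate for E-mixing of the Boolean shift: let i, j ∈ {#} ∪ ℤ with (i, j) ≠ (#, #), let A = ⟨·, e_i⟩ e_j be the corresponding rank-one operator on Γ, and let l_1 < l_2 < ⋯ < l_n be natural numbers. Then ‖∑_{k=1}^{n} U^{l_k} A U^{−l_k}‖ ≤ √n in operator norm. -/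
open scoped InnerProductSpace ComplexOrder
open ContinuousLinearMap Filter

noncomputable section

lemma orthonormal_eb : Orthonormal ℂ eb := by
  rw [orthonormal_iff_ite]
  intro a b
  classical
  rw [eb, eb, lp.inner_single_left, lp.single_apply]
  simp [RCLike.inner_apply, eq_comm]
  simp [Pi.single_apply]

lemma norm_sum_sq {m : ℕ} {w : Fin m → BF} (hw : Orthonormal ℂ w) (c : Fin m → ℂ) :
    ‖∑ k, c k • w k‖ ^ 2 = ∑ k, ‖c k‖ ^ 2 := by
  have h := hw.inner_sum c c Finset.univ
  rw [← inner_self_eq_norm_sq (𝕜 := ℂ), h, map_sum]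
  refine Finset.sum_congr rfl fun k _ => ?_
  rw [RCLike.conj_mul]; simp [← Complex.ofReal_pow]

lemma sqle {x c : ℝ} (hx : 0 ≤ x) (hc : 0 ≤ c) (n : ℕ) (h : x ^ 2 ≤ n * c ^ 2) :
    x ≤ Real.sqrt n * c := by
  have h1 := Real.sqrt_le_sqrt h
  rw [Real.sqrt_sq hx] at h1
  rwa [Real.sqrt_mul (by positivity), Real.sqrt_sq hc] at h1

lemma pow_eb_none {U : BF →L[ℂ] BF} (hU : IsBooleShift U) (m : ℕ) :
    (U ^ m) (eb none) = eb none := by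
  induction m with
  | zero => simp
  | succ m ih => rw [pow_succ, ContinuousLinearMap.mul_apply, hU.1, ih]

lemma pow_eb_some {U : BF →L[ℂ] BF} (hU : IsBooleShift U) (m : ℕ) (j : ℤ) :
    (U ^ m) (eb (some j)) = eb (some (j + m)) := by
  induction m generalizing j with
  | zero => simp
  | succ m ih =>
      rw [pow_succ, ContinuousLinearMap.mul_apply, hU.2 j, ih]
      congr 2
      push_cast
      ring

lemma happ (U : BF →L[ℂ] BF) (i j : Option ℤ) (n : ℕ) (l : Fin n → ℕ) (ζ : BF) :
    (∑ k : Fin n, U ^ (l k) * (innerSL ℂ (eb i)).smulRight (eb j) *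
      ContinuousLinearMap.adjoint (U ^ (l k))) ζ
      = ∑ k : Fin n, ⟪(U ^ (l k)) (eb i), ζ⟫_ℂ • (U ^ (l k)) (eb j) := by
  rw [ContinuousLinearMap.sum_apply]
  refine Finset.sum_congr rfl fun k _ => ?_
  rw [ContinuousLinearMap.mul_apply, ContinuousLinearMap.mul_apply, smulRight_apply, innerSL_apply_apply, map_smul,
    ContinuousLinearMap.adjoint_inner_right]


/-- Key estimate for `E`-mixing of the Boolean shift (from Proposition 6.2): for
`i, j ∈ {#} ∪ ℤ` with `(i,j) ≠ (#,#)`, the rank-one operator `A = ⟨·, e_i⟩ e_j`, and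
natural numbers `l_1 < l_2 < ⋯ < l_n`, one has `‖∑_{k=1}^n U^{l_k} A U^{−l_k}‖ ≤ √n`. -/
theorem boolean_shift_sqrt_estimate
    (U : BF →L[ℂ] BF) (hU : IsBooleShift U)
    (i j : Option ℤ) (hij : ¬(i = none ∧ j = none))
    (n : ℕ) (l : Fin n → ℕ) (hl : StrictMono l) :
    ‖∑ k : Fin n, U ^ (l k) * (innerSL ℂ (eb i)).smulRight (eb j) *
        ContinuousLinearMap.adjoint (U ^ (l k))‖ ≤ Real.sqrt n := by
  rcases Nat.eq_zero_or_pos n with hn | hn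
  · subst hn
    rw [Finset.univ_eq_empty, Finset.sum_empty, norm_zero]
    exact Real.sqrt_nonneg _
  have hn1 : (1 : ℝ) ≤ n := by exact_mod_cast hn
  have hinj : ∀ a : ℤ, Function.Injective (fun k : Fin n => (some (a + (l k : ℤ)) : Option ℤ)) := by
    intro a x y h
    simp only [Option.some.injEq, add_right_inj, Int.natCast_inj] at h
    exact hl.injective h
  refine opNorm_le_bound _ (by positivity) fun ζ => ?_
  rw [happ U i j n l ζ]
  refine sqle (norm_nonneg _) (norm_nonneg _) n ?_
  rcases i with _ | a <;> rcases j with _ | b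
  · exact absurd ⟨rfl, rfl⟩ hij
  · -- i = none, j = some b
    simp only [pow_eb_none hU, pow_eb_some hU]
    have how : Orthonormal ℂ (fun k : Fin n => eb (some (b + (l k : ℤ)))) :=
      orthonormal_eb.comp _ (hinj b)
    have hbd : ‖⟪eb none, ζ⟫_ℂ‖ ^ 2 ≤ ‖ζ‖ ^ 2 := by
      have h1 : ‖⟪eb none, ζ⟫_ℂ‖ ≤ ‖eb none‖ * ‖ζ‖ := norm_inner_le_norm _ _
      rw [orthonormal_eb.1 none, one_mul] at h1
      exact pow_le_pow_left₀ (norm_nonneg _) h1 2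
    calc ‖∑ k : Fin n, ⟪eb none, ζ⟫_ℂ • eb (some (b + (l k : ℤ)))‖ ^ 2
        = ∑ _k : Fin n, ‖⟪eb none, ζ⟫_ℂ‖ ^ 2 := norm_sum_sq how _
      _ ≤ ∑ _k : Fin n, ‖ζ‖ ^ 2 := Finset.sum_le_sum fun k _ => hbd
      _ = n * ‖ζ‖ ^ 2 := by rw [Finset.sum_const, Finset.card_univ, Fintype.card_fin,
          nsmul_eq_mul]
  · -- i = some a, j = none
    simp only [pow_eb_none hU, pow_eb_some hU]
    have hov : Orthonormal ℂ (fun k : Fin n => eb (some (a + (l k : ℤ)))) :=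
      orthonormal_eb.comp _ (hinj a)
    have heq : ∑ k : Fin n, ⟪eb (some (a + (l k : ℤ))), ζ⟫_ℂ • eb none
        = (∑ k : Fin n, ⟪eb (some (a + (l k : ℤ))), ζ⟫_ℂ) • eb none := by
      rw [Finset.sum_smul]
    rw [heq, norm_smul, orthonormal_eb.1 none, mul_one]
    have h1 : ‖∑ k : Fin n, ⟪eb (some (a + (l k : ℤ))), ζ⟫_ℂ‖
        ≤ ∑ k : Fin n, ‖⟪eb (some (a + (l k : ℤ))), ζ⟫_ℂ‖ := norm_sum_le _ _
    have h2 : (∑ k : Fin n, ‖⟪eb (some (a + (l k : ℤ))), ζ⟫_ℂ‖) ^ 2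
        ≤ n * ∑ k : Fin n, ‖⟪eb (some (a + (l k : ℤ))), ζ⟫_ℂ‖ ^ 2 := by
      have := Finset.sum_mul_sq_le_sq_mul_sq Finset.univ (fun _ : Fin n => (1 : ℝ))
        (fun k => ‖⟪eb (some (a + (l k : ℤ))), ζ⟫_ℂ‖)
      simpa [Finset.card_univ] using this
    calc ‖∑ k : Fin n, ⟪eb (some (a + (l k : ℤ))), ζ⟫_ℂ‖ ^ 2
        ≤ (∑ k : Fin n, ‖⟪eb (some (a + (l k : ℤ))), ζ⟫_ℂ‖) ^ 2 :=
          pow_le_pow_left₀ (norm_nonneg _) h1 2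
      _ ≤ n * ∑ k : Fin n, ‖⟪eb (some (a + (l k : ℤ))), ζ⟫_ℂ‖ ^ 2 := h2
      _ ≤ n * ‖ζ‖ ^ 2 :=
          mul_le_mul_of_nonneg_left (hov.sum_inner_products_le ζ) (by positivity)
  · -- i = some a, j = some b
    simp only [pow_eb_some hU]
    have hov : Orthonormal ℂ (fun k : Fin n => eb (some (a + (l k : ℤ)))) :=
      orthonormal_eb.comp _ (hinj a)
    have how : Orthonormal ℂ (fun k : Fin n => eb (some (b + (l k : ℤ)))) :=
      orthonormal_eb.comp _ (hinj b)
    calc ‖∑ k : Fin n, ⟪eb (some (a + (l k : ℤ))), ζ⟫_ℂ • eb (some (b + (l k : ℤ)))‖ ^ 2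
        = ∑ k : Fin n, ‖⟪eb (some (a + (l k : ℤ))), ζ⟫_ℂ‖ ^ 2 := norm_sum_sq how _
      _ ≤ ‖ζ‖ ^ 2 := hov.sum_inner_products_le ζ
      _ ≤ n * ‖ζ‖ ^ 2 := le_mul_of_one_le_left (by positivity) hn1

end
end
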